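/- In a k-approval election E with unique winner w and second-highest scorer z, we have 2·(M(E) − 1) < s(w) − s(z) ≤ 2·M(E), where M(E) is the margin of victory. -/

import Mathlib

open Finset

/-- A vote over `m` candidates is a linear order, represented as the bijection sending each
candidate to its position (position `0` is the top). -/
abbrev Vote (m : ℕ) := Fin m ≃ Fin m

/-- The number of votes in which the two profiles differ. -/
def diffCount {n m : ℕ} (p q : Fin n → Vote m) : ℕ :=
  (univ.filter fun i => p i ≠ q i).card

/-- The `k`-approval score of candidate `x`: the number of votes ranking `x` within the
top `k` positions. -/
def appScore {n m : ℕ} (k : ℕ) (p : Fin n → Vote m) (x : Fin m) : ℕ :=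
  (univ.filter fun i => (p i x : ℕ) < k).card

/-- The set of `k`-approval winners: candidates with maximum `k`-approval score. -/
def appWinners {n m : ℕ} (k : ℕ) (p : Fin n → Vote m) : Set (Fin m) :=
  {x | ∀ y, appScore k p y ≤ appScore k p x}

/-- The margin of victory: the minimum number of votes that must be changed to change
the winner set. -/
noncomputable def MoV {n m : ℕ} (W : (Fin n → Vote m) → Set (Fin m))
    (p : Fin n → Vote m) : ℕ :=
  sInf {d | ∃ q : Fin n → Vote m, diffCount p q = d ∧ W q ≠ W p}

lemma diffCount_comm {n m : ℕ} (p q : Fin n → Vote m) : diffCount p q = diffCount q p := by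
  unfold diffCount; congr 1; ext i; simp [ne_comm]

lemma score_lipschitz {n m : ℕ} (k : ℕ) (p q : Fin n → Vote m) (x : Fin m) :
    appScore k p x ≤ appScore k q x + diffCount p q := by
  unfold appScore diffCount
  refine le_trans (card_le_card ?_) (card_union_le _ _)
  intro i hi
  simp only [mem_filter, mem_union, mem_univ, true_and] at *
  by_cases h : p i = q i
  · exact Or.inl (h ▸ hi)
  · exact Or.inr h

/-- In a `k`-approval election with unique winner `w` and second-highest scorer `z`,
`2(M(E) - 1) < s(w) - s(z) ≤ 2 M(E)`. -/
theorem stmt4 (n m k : ℕ) (hm : 2 ≤ m) (hn : 1 ≤ n) (hk1 : 1 ≤ k) (hkm : k < m)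
    (p : Fin n → Vote m) (w z : Fin m)
    (hw : ∀ y, y ≠ w → appScore k p y < appScore k p w)
    (hz : z ≠ w) (hz2 : ∀ y, y ≠ w → appScore k p y ≤ appScore k p z) :
    2 * ((MoV (appWinners k) p : ℤ) - 1) < (appScore k p w : ℤ) - appScore k p z ∧
    (appScore k p w : ℤ) - appScore k p z ≤ 2 * (MoV (appWinners k) p : ℤ) := by
  have hzw : appScore k p z < appScore k p w := hw z hz
  set sw := appScore k p w with hsw
  set sz := appScore k p z with hsz
  set Δ := sw - sz with hΔ
  set d := (Δ + 1) / 2 with hd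
  -- z not a winner of p
  have hznw : z ∉ appWinners k p := by
    intro h; exact absurd (h w) (not_le.mpr hzw)
  -- construction: the set A of votes where w is approved and z is not
  set A : Finset (Fin n) := univ.filter (fun i => (p i w : ℕ) < k ∧ ¬ ((p i z : ℕ) < k)) with hA
  have hAcard : Δ ≤ A.card := by
    have hsplit := card_filter_add_card_filter_not
      (s := univ.filter (fun i => (p i w : ℕ) < k)) (p := fun i => (p i z : ℕ) < k)
    have h1 : ((univ.filter (fun i => (p i w : ℕ) < k)).filter (fun i => (p i z : ℕ) < k)).card
        ≤ sz := by
      apply card_le_card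
      intro i hi; simp only [mem_filter] at hi ⊢; exact ⟨hi.1.1, hi.2⟩
    have h2 : (univ.filter (fun i => (p i w : ℕ) < k)).filter
        (fun i => ¬ ((p i z : ℕ) < k)) = A := by
      rw [hA, filter_filter]
    rw [h2] at hsplit
    have : sw = ((univ.filter (fun i => (p i w : ℕ) < k)).filter
        (fun i => (p i z : ℕ) < k)).card + A.card := hsplit.symm
    omega
  have hdA : d ≤ A.card := by omega
  obtain ⟨S, hSA, hScard⟩ := Finset.exists_subset_card_eq (s := A) (n := d) hdA
  -- properties of S members
  have hSw : ∀ i ∈ S, (p i w : ℕ) < k := fun i hi => (mem_filter.mp (hSA hi)).2.1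
  have hSz : ∀ i ∈ S, ¬ ((p i z : ℕ) < k) := fun i hi => (mem_filter.mp (hSA hi)).2.2
  -- the modified profile
  set q : Fin n → Vote m := fun i =>
    if i ∈ S then (p i).trans (Equiv.swap (p i w) (p i z)) else p i with hq
  have hqS : ∀ i ∈ S, q i w = p i z ∧ q i z = p i w ∧ ∀ y, y ≠ w → y ≠ z → q i y = p i y := by
    intro i hi
    simp only [hq, if_pos hi, Equiv.trans_apply]
    refine ⟨Equiv.swap_apply_left _ _, Equiv.swap_apply_right _ _, ?_⟩
    intro y hyw hyz
    exact Equiv.swap_apply_of_ne_of_ne (fun h => hyw ((p i).injective h))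
      (fun h => hyz ((p i).injective h))
  have hqnS : ∀ i ∉ S, q i = p i := fun i hi => by simp [hq, if_neg hi]
  have hdiff : diffCount p q = d := by
    rw [← hScard]
    unfold diffCount
    congr 1
    ext i
    simp only [mem_filter, mem_univ, true_and]
    constructor
    · intro h
      by_contra hi
      exact h ((hqnS i hi).symm)
    · intro hi h
      have h1 : q i w = p i z := (hqS i hi).1
      rw [← h] at h1
      exact hz ((p i).injective h1).symm
  -- scores of q
  have hqw : appScore k q w = sw - d := by
    unfold appScore
    have : univ.filter (fun i => (q i w : ℕ) < k)
        = (univ.filter (fun i => (p i w : ℕ) < k)) \ S := by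
      ext i
      simp only [mem_filter, mem_sdiff, mem_univ, true_and]
      by_cases hi : i ∈ S
      · rw [(hqS i hi).1]
        simp [hi, hSz i hi]
      · rw [hqnS i hi]
        simp [hi]
    rw [this, card_sdiff_of_subset (fun i hi => mem_filter.mpr ⟨mem_univ i, hSw i hi⟩), hScard]
    rfl
  have hqz : appScore k q z = sz + d := by
    unfold appScore
    have : univ.filter (fun i => (q i z : ℕ) < k)
        = (univ.filter (fun i => (p i z : ℕ) < k)) ∪ S := by
      ext i
      simp only [mem_filter, mem_union, mem_univ, true_and]
      by_cases hi : i ∈ S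
      · rw [(hqS i hi).2.1]
        simp [hi, hSw i hi]
      · rw [hqnS i hi]
        simp [hi]
    have hdisj : Disjoint (univ.filter (fun i => (p i z : ℕ) < k)) S :=
      disjoint_left.mpr (fun i hi his => hSz i his (mem_filter.mp hi).2)
    rw [this, card_union_of_disjoint hdisj, hScard]
    rfl
  have hqy : ∀ y, y ≠ w → y ≠ z → appScore k q y = appScore k p y := by
    intro y hyw hyz
    unfold appScore
    congr 1
    ext i
    simp only [mem_filter, mem_univ, true_and]
    by_cases hi : i ∈ S
    · rw [(hqS i hi).2.2 y hyw hyz]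
    · rw [hqnS i hi]
  -- z is a winner of q
  have hzq : z ∈ appWinners k q := by
    intro y
    rw [hqz]
    by_cases hyw : y = w
    · rw [hyw, hqw]; omega
    · by_cases hyz : y = z
      · rw [hyz, hqz]
      · rw [hqy y hyw hyz]
        exact le_trans (hz2 y hyw) (Nat.le_add_right _ _)
  have hWne : appWinners k q ≠ appWinners k p := by
    intro h
    exact hznw (h ▸ hzq)
  -- the MoV set
  set T : Set ℕ := {d | ∃ q : Fin n → Vote m, diffCount p q = d ∧
      appWinners k q ≠ appWinners k p} with hT
  have hdT : d ∈ T := ⟨q, hdiff, hWne⟩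
  have hMle : MoV (appWinners k) p ≤ d := Nat.sInf_le hdT
  -- lower bound: sInf is attained
  have hmem : MoV (appWinners k) p ∈ T := Nat.sInf_mem ⟨d, hdT⟩
  obtain ⟨q0, hq0d, hq0ne⟩ := hmem
  set M := MoV (appWinners k) p with hM
  -- W(p) = {w}
  have hWp : appWinners k p = {w} := by
    ext y
    simp only [appWinners, Set.mem_setOf_eq, Set.mem_singleton_iff]
    constructor
    · intro hy
      by_contra hyw
      exact absurd (hy w) (not_le.mpr (hw y hyw))
    · intro hy u
      rw [hy]
      by_cases huw : u = w
      · rw [huw]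
      · exact le_of_lt (hw u huw)
  -- find y ≠ w with appScore k q0 w ≤ appScore k q0 y
  have hy : ∃ y, y ≠ w ∧ appScore k q0 w ≤ appScore k q0 y := by
    by_cases hwin : ∃ y, y ≠ w ∧ y ∈ appWinners k q0
    · obtain ⟨y, hyw, hyW⟩ := hwin
      exact ⟨y, hyw, hyW w⟩
    · exfalso
      push_neg at hwin
      obtain ⟨x, _, hx⟩ := Finset.exists_max_image univ (appScore k q0)
        ⟨w, mem_univ w⟩
      have hxW : x ∈ appWinners k q0 := fun y => hx y (mem_univ y)
      have hxw : x = w := by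
        by_contra h
        exact hwin x h hxW
      apply hq0ne
      rw [hWp]
      ext y
      simp only [Set.mem_singleton_iff]
      constructor
      · intro hyW
        by_contra h
        exact hwin y h hyW
      · intro h
        rw [h, ← hxw]
        exact hxW
  obtain ⟨y, hyw, hywle⟩ := hy
  -- chain: sw ≤ sz + 2M
  have hchain : sw ≤ sz + 2 * M := by
    have l1 : appScore k p w ≤ appScore k q0 w + M := by
      have := score_lipschitz k p q0 w
      rwa [hq0d] at this
    have l2 : appScore k q0 y ≤ appScore k p y + M := by
      have := score_lipschitz k q0 p y
      rwa [diffCount_comm q0 p, hq0d] at this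
    have l3 : appScore k p y ≤ sz := hz2 y hyw
    omega
  -- conclude
  have h2d : 2 * d ≤ Δ + 1 := by omega
  have hszw : sz ≤ sw := le_of_lt hzw
  constructor
  · have : 2 * M ≤ sw - sz + 1 := by omega
    push_cast
    omega
  · push_cast
    omega
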